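/- Let Z be a Hausdorff locally convex topological real vector space, K ⊆ Z a convex subset, U ⊆ K a relatively open subset of K, A ⊆ U a subset that is metrizable in the subspace topology, and r : U → A a continuous retraction (r restricted to A is the identity). Then A is an absolute neighborhood retract. -/

import Mathlib

universe u

/-- A topological space `X` is an absolute neighborhood retract (ANR) if whenever
it is embedded as a closed subset of a metric space `Z`, some open neighborhood of
the image retracts onto the image. -/
def IsANR (X : Type u) [TopologicalSpace X] : Prop :=
  ∀ (Z : Type u) [MetricSpace Z] (e : X → Z),
    Topology.IsEmbedding e → IsClosed (Set.range e) →
      ∃ (U : Set Z) (r : Z → Z), IsOpen U ∧ Set.range e ⊆ U ∧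
        ContinuousOn r U ∧ (∀ z ∈ U, r z ∈ Set.range e) ∧ ∀ z ∈ Set.range e, r z = z

open Set Metric Topology

/-- **Lemma 3.1.** If `Z` is a Hausdorff locally convex topological real vector
space, `K ⊆ Z` is convex, `U ⊆ K` is relatively open in `K`, `A ⊆ U` is
metrizable, and `r : U → A` is a continuous retraction, then `A` is an ANR. -/
theorem stmt_15 {Z : Type u} [AddCommGroup Z] [Module ℝ Z] [TopologicalSpace Z]
    [IsTopologicalAddGroup Z] [ContinuousSMul ℝ Z] [LocallyConvexSpace ℝ Z]
    [T2Space Z]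
    (K : Set Z) (hK : Convex ℝ K)
    (U : Set Z) (hUK : U ⊆ K) (hUopen : ∃ O : Set Z, IsOpen O ∧ U = O ∩ K)
    (A : Set Z) (hAU : A ⊆ U) (hAmet : TopologicalSpace.MetrizableSpace A)
    (r : Z → Z) (hrc : ContinuousOn r U) (hrmem : ∀ z ∈ U, r z ∈ A)
    (hrid : ∀ z ∈ A, r z = z) :
    IsANR A := by
  classical
  intro M _ e he hclosed
  obtain ⟨O, hOopen, hUO⟩ := hUopen
  by_cases hA : Nonempty A
  swap
  · refine ⟨∅, id, isOpen_empty, ?_, continuousOn_empty _, by simp, by simp⟩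
    rintro z ⟨a, rfl⟩; exact absurd ⟨a⟩ hA
  obtain ⟨a₀⟩ := hA
  set C : Set M := Set.range e with hCdef
  have hCne : C.Nonempty := ⟨e a₀, a₀, rfl⟩
  -- the inverse homeomorphism and the map `f : C → Z`
  let e' : A ≃ₜ C := he.toHomeomorph
  let f : C → Z := fun c => ((e'.symm c : A) : Z)
  have hfc : Continuous f := continuous_subtype_val.comp e'.symm.continuous
  have hfA : ∀ c, f c ∈ A := fun c => (e'.symm c).2
  have hfe : ∀ a : A, f ⟨e a, ⟨a, rfl⟩⟩ = (a : Z) := by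
    intro a
    have : e'.symm ⟨e a, ⟨a, rfl⟩⟩ = a := e'.symm_apply_apply a
    simp only [f]
    rw [show (⟨e a, ⟨a, rfl⟩⟩ : C) = e' a from rfl, e'.symm_apply_apply]
  -- positivity of distance to `C` off `C`
  have hpos : ∀ x : M, x ∉ C → 0 < infDist x C := fun x hx =>
    (hclosed.notMem_iff_infDist_pos hCne).mp hx
  -- index type: points of the complement of `C`
  let ι := {x : M // x ∉ C}
  -- balls covering the complement
  let B : ι → Set ι := fun p => Subtype.val ⁻¹' (Metric.ball (p : M) (infDist (p : M) C / 3))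
  have hBopen : ∀ p, IsOpen (B p) := fun p => isOpen_ball.preimage continuous_subtype_val
  have hBcov : (univ : Set ι) ⊆ ⋃ p, B p := by
    intro p _
    exact mem_iUnion.mpr ⟨p, by
      simp only [B, mem_preimage, mem_ball, dist_self]
      exact div_pos (hpos _ p.2) (by norm_num)⟩
  obtain ⟨φ, hφsub⟩ := PartitionOfUnity.exists_isSubordinate isClosed_univ B hBopen hBcov
  -- choose nearby points of `C`
  have hach : ∀ p : ι, ∃ y ∈ C, dist (p : M) y < 2 * infDist (p : M) C := by
    intro p
    exact (infDist_lt_iff hCne).mp (by nlinarith [hpos _ p.2])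
  choose a haC hadist using hach
  let g : ι → Z := fun p => f ⟨a p, haC p⟩
  have hgA : ∀ p, g p ∈ A := fun p => hfA _
  -- the Dugundji extension
  let F' : ι → Z := fun x => ∑ᶠ p, φ p x • g p
  have hF'cont : Continuous F' :=
    hφsub.continuous_finsum_smul hBopen (fun p => continuousOn_const)
  let F : M → Z := fun x => if h : x ∈ C then f ⟨x, h⟩ else F' ⟨x, h⟩
  have hFe : ∀ b : A, F (e b) = (b : Z) := by
    intro b
    have hb : e b ∈ C := ⟨b, rfl⟩
    simp only [F, dif_pos hb]
    exact hfe b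
  -- values of F' lie in convex sets containing relevant g's
  have hF'mem : ∀ (x : ι) (t : Set Z), Convex ℝ t → (∀ p, φ p x ≠ 0 → g p ∈ t) → F' x ∈ t := by
    intro x t ht hmem
    exact φ.finsum_smul_mem_convex (g := fun p _ => g p) (mem_univ x)
      (fun p hp => hmem p hp) ht
  have hFK : ∀ x, F x ∈ K := by
    intro x
    by_cases hx : x ∈ C
    · simp only [F, dif_pos hx]; exact hUK (hAU (hfA _))
    · simp only [F, dif_neg hx]
      exact hF'mem _ K hK (fun p _ => hUK (hAU (hgA p)))
  -- continuity of F
  have hFcont : Continuous F := by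
    rw [continuous_iff_continuousAt]
    intro x
    by_cases hx : x ∈ C
    · -- continuity at points of C
      intro N hN
      have hFx : F x = f ⟨x, hx⟩ := dif_pos hx
      obtain ⟨W, ⟨hWnhds, hWconv⟩, hWN⟩ :=
        (LocallyConvexSpace.convex_basis (𝕜 := ℝ) (F x)).mem_iff.mp hN
      -- continuity of f at ⟨x, hx⟩ gives δ
      have hW' : f ⁻¹' W ∈ 𝓝 (⟨x, hx⟩ : C) := hfc.continuousAt (hFx ▸ hWnhds)
      obtain ⟨δ, hδpos, hδ⟩ := Metric.mem_nhds_iff.mp hW'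
      have hδ' : ∀ (y : M) (hy : y ∈ C), dist y x < δ → f ⟨y, hy⟩ ∈ W := by
        intro y hy hlt
        exact hδ (show (⟨y, hy⟩ : C) ∈ Metric.ball (⟨x, hx⟩ : C) δ by
          rw [mem_ball, Subtype.dist_eq]; exact hlt)
      rw [Filter.mem_map]
      refine Filter.mem_of_superset (Metric.ball_mem_nhds x (by positivity : (0:ℝ) < δ / 5)) ?_
      intro y hy
      rw [mem_ball] at hy
      simp only [mem_preimage]
      apply hWN
      by_cases hyC : y ∈ C
      · show F y ∈ W
        simp only [F, dif_pos hyC]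
        exact hδ' y hyC (lt_trans hy (by linarith))
      · show F y ∈ W
        simp only [F, dif_neg hyC]
        refine hF'mem ⟨y, hyC⟩ W hWconv ?_
        intro p hp
        -- y is in the ball B p
        have hyB : (⟨y, hyC⟩ : ι) ∈ B p :=
          hφsub p (subset_closure (by simpa using hp))
        simp only [B, mem_preimage, mem_ball] at hyB
        -- estimates
        have h1 : infDist (p : M) C ≤ infDist y C + dist (p : M) y :=
          infDist_le_infDist_add_dist
        have h2 : infDist y C ≤ dist y x := infDist_le_dist_of_mem hx
        have h3 : dist (p : M) y = dist y (p : M) := dist_comm _ _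
        have h4 : infDist (p : M) C ≤ 3 / 2 * dist y x := by
          rw [h3] at h1; nlinarith
        have h5 : dist (a p) x ≤ dist (a p) (p : M) + dist (p : M) y + dist y x :=
          dist_triangle4 (a p) (p : M) y x
        have h6 : dist (a p) (p : M) < 2 * infDist (p : M) C := by
          rw [dist_comm]; exact hadist p
        have h7 : dist (a p) x < δ := by
          nlinarith [hyB, h3, h4, h5, h6, hy, hδpos]
        exact hδ' (a p) (haC p) h7
    · -- continuity at points of the complement
      have hcont : ContinuousOn F Cᶜ := by
        rw [continuousOn_iff_continuous_restrict]
        have : Cᶜ.domRestrict F = F' := by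
          funext y
          simp only [domRestrict, F, dif_neg (y.2 : ↑y ∉ C)]
          rfl
        rw [this]
        exact hF'cont
      exact hcont.continuousAt (hclosed.isOpen_compl.mem_nhds hx)
  -- now assemble the ANR data
  have hUsub : U ⊆ O := hUO ▸ inter_subset_left
  -- the "inverse" of e extended to Z
  let E : Z → M := fun w => if h : w ∈ A then e ⟨w, h⟩ else e a₀
  have hEcont : ContinuousOn E A := by
    rw [continuousOn_iff_continuous_restrict]
    have : A.domRestrict E = fun w : A => e w := by
      funext w
      simp only [domRestrict, E, dif_pos w.2]
    rw [this]
    exact he.continuous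
  refine ⟨F ⁻¹' O, fun z => E (r (F z)), hOopen.preimage hFcont, ?_, ?_, ?_, ?_⟩
  · rintro z ⟨b, rfl⟩
    have : F (e b) = (b : Z) := hFe b
    simp only [mem_preimage, this]
    exact hUsub (hAU b.2)
  · -- continuity of the retraction on F ⁻¹' O
    have hmaps : MapsTo F (F ⁻¹' O) U := by
      intro z hz
      rw [hUO]
      exact ⟨hz, hFK z⟩
    have h1 : ContinuousOn (fun z => r (F z)) (F ⁻¹' O) :=
      hrc.comp hFcont.continuousOn hmaps
    have hmaps2 : MapsTo (fun z => r (F z)) (F ⁻¹' O) A :=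
      fun z hz => hrmem _ (hmaps hz)
    exact hEcont.comp h1 hmaps2
  · intro z hz
    have hFz : F z ∈ U := by rw [hUO]; exact ⟨hz, hFK z⟩
    have hrA : r (F z) ∈ A := hrmem _ hFz
    simp only [E, dif_pos hrA]
    exact ⟨_, rfl⟩
  · rintro z ⟨b, rfl⟩
    have h1 : F (e b) = (b : Z) := hFe b
    have h2 : r (b : Z) = (b : Z) := hrid _ b.2
    simp only [E, h1, h2, dif_pos b.2]
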